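/- Let f : R^n → R, and let X = ⟨x⁰, x⁰+d¹, …, x⁰+dᵐ⟩ with S = [d¹ ⋯ dᵐ] ∈ R^{n×m} having full row rank n. Let Y be the ordered set with directions d¹,…,dᵐ,−d¹,…,−dᵐ (reference point x⁰). Then the generalized simplex gradient of f over Y equals the generalized centred simplex gradient of f over X: (S(Y)ᵀ)† δˢ_f(Y) = (Sᵀ)† δᶜ_f(X). -/

import Mathlib

open Matrix

/-- `B` is the Moore–Penrose pseudoinverse of `A`: the four Penrose equations. -/
def IsMPInv {n m : Type*} [Fintype n] [Fintype m]
    (A : Matrix n m ℝ) (B : Matrix m n ℝ) : Prop :=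
  A * B * A = A ∧ B * A * B = B ∧ (A * B)ᵀ = A * B ∧ (B * A)ᵀ = B * A

/-- The Moore–Penrose pseudoinverse is unique. -/
theorem IsMPInv.unique {n m : Type*} [Fintype n] [Fintype m]
    {A : Matrix n m ℝ} {B C : Matrix m n ℝ}
    (hB : IsMPInv A B) (hC : IsMPInv A C) : B = C := by
  obtain ⟨hB1, hB2, hB3, hB4⟩ := hB
  obtain ⟨hC1, hC2, hC3, hC4⟩ := hC
  have hAB : A * B = A * C := by
    calc A * B = Bᵀ * Aᵀ := by rw [← hB3, transpose_mul]
    _ = Bᵀ * (A * C * A)ᵀ := by rw [hC1]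
    _ = Bᵀ * (Aᵀ * (Cᵀ * Aᵀ)) := by rw [transpose_mul, transpose_mul]
    _ = (Bᵀ * Aᵀ) * (Cᵀ * Aᵀ) := by simp only [Matrix.mul_assoc]
    _ = (A * B) * (A * C) := by rw [← transpose_mul A B, ← transpose_mul A C, hB3, hC3]
    _ = A * B * A * C := by simp only [Matrix.mul_assoc]
    _ = A * C := by rw [hB1]
  have hBA : B * A = C * A := by
    calc B * A = Aᵀ * Bᵀ := by rw [← hB4, transpose_mul]
    _ = (A * C * A)ᵀ * Bᵀ := by rw [hC1]
    _ = (Aᵀ * (Cᵀ * Aᵀ)) * Bᵀ := by rw [transpose_mul, transpose_mul]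
    _ = (Aᵀ * Cᵀ) * (Aᵀ * Bᵀ) := by simp only [Matrix.mul_assoc]
    _ = (C * A) * (B * A) := by rw [← transpose_mul C A, ← transpose_mul B A, hC4, hB4]
    _ = C * (A * B * A) := by simp only [Matrix.mul_assoc]
    _ = C * A := by rw [hB1]
  calc B = B * A * B := hB2.symm
  _ = B * (A * C) := by rw [Matrix.mul_assoc, hAB]
  _ = (B * A) * C := by simp only [Matrix.mul_assoc]
  _ = C * A * C := by rw [hBA]
  _ = C := hC2

/-- For `S = [d¹ ⋯ dᵐ]` of full row rank `n`, the generalized simplex gradient over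
`Y = ⟨x⁰, x⁰±d¹, …, x⁰±dᵐ⟩` equals the generalized centred simplex gradient over `X`:
`(S(Y)ᵀ)† δˢ_f(Y) = (Sᵀ)† δᶜ_f(X)`, where `S(Y) = [S −S]`. -/
theorem gsg_doubled_eq_gcsg {n m : ℕ}
    (f : EuclideanSpace ℝ (Fin n) → ℝ) (x₀ : EuclideanSpace ℝ (Fin n))
    (d : Fin m → EuclideanSpace ℝ (Fin n))
    (S : Matrix (Fin n) (Fin m) ℝ) (hS : S = Matrix.of fun j i => d i j)
    (hrank : S.rank = n)
    (P : Matrix (Fin n) (Fin m ⊕ Fin m) ℝ)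
    (hP : IsMPInv (Matrix.fromCols S (-S))ᵀ P)
    (Q : Matrix (Fin n) (Fin m) ℝ) (hQ : IsMPInv Sᵀ Q) :
    P.mulVec
        (Sum.elim (fun i => f (x₀ + d i) - f x₀) fun i => f (x₀ - d i) - f x₀) =
      Q.mulVec fun i => (f (x₀ + d i) - f (x₀ - d i)) / 2 := by
  obtain ⟨hQ1, hQ2, hQ3, hQ4⟩ := hQ
  -- candidate pseudoinverse of (fromColumns S (-S))ᵀ
  set B : Matrix (Fin n) (Fin m ⊕ Fin m) ℝ :=
    (1/2 : ℝ) • fromCols Q (-Q) with hB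
  set A : Matrix (Fin m ⊕ Fin m) (Fin n) ℝ := (fromCols S (-S))ᵀ with hA
  have hArows : A = fromRows Sᵀ (-S)ᵀ := by
    rw [hA, transpose_fromCols]
  have hAB : A * B = (1/2 : ℝ) •
      fromBlocks (Sᵀ * Q) (Sᵀ * -Q) (-Sᵀ * Q) (-Sᵀ * -Q) := by
    rw [hArows, hB, Matrix.mul_smul, fromRows_mul_fromCols, transpose_neg]
  have hBA : B * A = Q * Sᵀ := by
    rw [hArows, hB, Matrix.smul_mul, fromCols_mul_fromRows, transpose_neg,
      Matrix.neg_mul, Matrix.mul_neg, neg_neg]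
    rw [← two_smul ℝ (Q * Sᵀ), smul_smul]
    norm_num
  have hMP : IsMPInv A B := by
    refine ⟨?_, ?_, ?_, ?_⟩
    · rw [Matrix.mul_assoc, hBA, hArows, fromRows_mul]
      simp only [← Matrix.mul_assoc, transpose_neg, Matrix.neg_mul, hQ1]
    · rw [hBA, hB, Matrix.mul_smul, mul_fromCols, Matrix.mul_neg, hQ2]
    · rw [hAB]
      simp only [transpose_smul, fromBlocks_transpose, Matrix.mul_neg, Matrix.neg_mul,
        neg_neg, transpose_neg, hQ3]
    · rw [hBA]; exact hQ4
  have hPB : P = B := hP.unique hMP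
  rw [hPB, hB, Matrix.smul_mulVec, fromCols_mulVec_sumElim, Matrix.neg_mulVec]
  have hw : (fun i => (f (x₀ + d i) - f (x₀ - d i)) / 2) =
      (1/2 : ℝ) • ((fun i => f (x₀ + d i) - f x₀) - fun i => f (x₀ - d i) - f x₀) := by
    funext i
    simp only [Pi.smul_apply, Pi.sub_apply, smul_eq_mul]
    ring
  rw [hw, Matrix.mulVec_smul, Matrix.mulVec_sub, sub_eq_add_neg]
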